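/- Under the standardized i.i.d. setup, E(B₄²) = (n²(n-1)³)⁻¹ C₁ + (n-2)(n²(n-1)³)⁻¹ C₂, where C₁ = E(Y₁²Y₂²K_{p,12}²) and C₂ = E[Y₁²(Σ_{j=1}^p ρ_j X_{1j}/p)²], with B₄ = (n(n-1)²)⁻¹ Σ_{t≠k} Y_kY_tK_{p,tk} and K_{p,tk} = p⁻¹Σ_j X_{tj}X_{kj}. -/

import Mathlib

open scoped ENNReal
open MeasureTheory ProbabilityTheory Finset

lemma ennreal_half : (1 : ℝ≥0∞) / 2 = 1 / 4 + 1 / 4 := by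
  rw [ENNReal.div_add_div_same, show (4:ℝ≥0∞) = 2*2 by norm_num,
    ENNReal.div_eq_div_iff (by norm_num) (by norm_num) (by norm_num) (by norm_num)]
  ring

lemma ennreal_one' : (1 : ℝ≥0∞) / 1 = 1 / 2 + 1 / 2 := by
  rw [ENNReal.div_add_div_same,
    ENNReal.div_eq_div_iff (by norm_num) (by norm_num) (by norm_num) (by norm_num)]
  ring

lemma memLp_two_mul {Ω : Type*} [MeasurableSpace Ω] {μ : Measure Ω} {f g : Ω → ℝ}
    (hf : MemLp f 4 μ) (hg : MemLp g 4 μ) : MemLp (fun ω => f ω * g ω) 2 μ := by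
  exact hg.smul hf (hpqr := ⟨by simp only [← one_div]; exact ennreal_half.symm⟩)

lemma integrable_mul_of_memLp_two {Ω : Type*} [MeasurableSpace Ω] {μ : Measure Ω} {f g : Ω → ℝ}
    (hf : MemLp f 2 μ) (hg : MemLp g 2 μ) : Integrable (fun ω => f ω * g ω) μ := by
  rw [← memLp_one_iff_integrable]
  exact hg.smul hf (hpqr := ⟨by simp only [← one_div]; exact ennreal_one'.symm⟩)

theorem second_moment_of_B4
    {Ω : Type*} [MeasurableSpace Ω] (μ : Measure Ω) [IsProbabilityMeasure μ]
    (n p : ℕ) (hn : 3 ≤ n) (hp : 1 ≤ p)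
    (k a b : Fin n) (hab : a ≠ b) (hak : a ≠ k) (hbk : b ≠ k)
    (X : Fin n → Ω → Fin p → ℝ) (Y : Fin n → Ω → ℝ)
    (hmeas : ∀ i, Measurable (fun ω => (X i ω, Y i ω)))
    (hindep : iIndepFun (fun i ω => (X i ω, Y i ω)) μ)
    (hident : ∀ i, IdentDistrib (fun ω => (X i ω, Y i ω))
      (fun ω => (X a ω, Y a ω)) μ μ)
    (hX4 : ∀ i j, MemLp (fun ω => X i ω j) 4 μ)
    (hY4 : ∀ i, MemLp (Y i) 4 μ)
    (hXmean : ∀ j, ∫ ω, X a ω j ∂μ = 0)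
    (ρ : Fin p → ℝ) (hρ : ∀ j, ρ j = ∫ ω, X a ω j * Y a ω ∂μ)
    (K : Fin n → Fin n → Ω → ℝ)
    (hK : ∀ t s ω, K t s ω = (1 / (p : ℝ)) * ∑ j, X t ω j * X s ω j)
    (B₄ : Ω → ℝ)
    (hB₄ : ∀ ω, B₄ ω = (1 / ((n : ℝ) * ((n : ℝ) - 1) ^ 2)) *
      ∑ t ∈ univ.erase k, Y k ω * Y t ω * K t k ω)
    (C₁ C₂ : ℝ)
    (hC₁ : C₁ = ∫ ω, (Y a ω) ^ 2 * (Y b ω) ^ 2 * (K a b ω) ^ 2 ∂μ)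
    (hC₂ : C₂ = ∫ ω, (Y a ω) ^ 2 * (∑ j, ρ j * X a ω j / (p : ℝ)) ^ 2 ∂μ) :
    ∫ ω, (B₄ ω) ^ 2 ∂μ
      = (1 / ((n : ℝ) ^ 2 * ((n : ℝ) - 1) ^ 3)) * C₁
        + (((n : ℝ) - 2) / ((n : ℝ) ^ 2 * ((n : ℝ) - 1) ^ 3)) * C₂ := by
  classical
  have hN3 : (3 : ℝ) ≤ (n : ℝ) := by exact_mod_cast hn
  -- integrals of functions of a single coordinate, via identical distribution
  have hint1 : ∀ (i : Fin n) (j : Fin p), ∫ ω, Y i ω * X i ω j ∂μ = ρ j := by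
    intro i j
    have h := ((hident i).comp (u := fun z : (Fin p → ℝ) × ℝ => z.2 * z.1 j)
      (by fun_prop)).integral_eq
    rw [hρ j]
    simp only [Function.comp] at h
    rw [h]
    simp [mul_comm]
  have hintB : ∀ (i : Fin n) (j l : Fin p),
      ∫ ω, (Y i ω)^2 * (X i ω j * X i ω l) ∂μ
        = ∫ ω, (Y a ω)^2 * (X a ω j * X a ω l) ∂μ := by
    intro i j l
    have h := ((hident i).comp (u := fun z : (Fin p → ℝ) × ℝ => z.2^2 * (z.1 j * z.1 l))
      (by fun_prop)).integral_eq
    simpa [Function.comp] using h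
  -- integrability facts
  have intYX : ∀ (i : Fin n) (j : Fin p), Integrable (fun ω => Y i ω * X i ω j) μ :=
    fun i j => (memLp_two_mul (hY4 i) (hX4 i j)).integrable one_le_two
  have intB : ∀ (i : Fin n) (j l : Fin p),
      Integrable (fun ω => (Y i ω)^2 * (X i ω j * X i ω l)) μ := by
    intro i j l
    have := integrable_mul_of_memLp_two (memLp_two_mul (hY4 i) (hY4 i))
      (memLp_two_mul (hX4 i j) (hX4 i l))
    simpa [pow_two] using this
  have intA : ∀ (t s : Fin n) (j l : Fin p),
      Integrable (fun ω => (Y t ω * X t ω j) * (Y s ω * X s ω l)) μ :=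
    fun t s j l => integrable_mul_of_memLp_two (memLp_two_mul (hY4 t) (hX4 t j))
      (memLp_two_mul (hY4 s) (hX4 s l))
  -- C₂ expansion
  have hC₂' : C₂ = ∑ j, ∑ l,
      ρ j * ρ l * (∫ ω, (Y a ω)^2 * (X a ω j * X a ω l) ∂μ) / (p:ℝ)^2 := by
    rw [hC₂]
    have e : ∀ ω : Ω, (Y a ω)^2 * (∑ j, ρ j * X a ω j / (p:ℝ))^2
        = ∑ j, ∑ l, ρ j * ρ l * ((Y a ω)^2 * (X a ω j * X a ω l)) / (p:ℝ)^2 := by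
      intro ω
      rw [pow_two (∑ j, ρ j * X a ω j / (p:ℝ)), Finset.sum_mul_sum, Finset.mul_sum]
      refine Finset.sum_congr rfl fun j _ => ?_
      rw [Finset.mul_sum]
      refine Finset.sum_congr rfl fun l _ => ?_
      ring
    rw [integral_congr_ae (Filter.Eventually.of_forall e),
      integral_finset_sum _ (fun j _ => integrable_finset_sum _
        (fun l _ => ((intB a j l).const_mul _).div_const _))]
    refine Finset.sum_congr rfl fun j _ => ?_
    rw [integral_finset_sum _ (fun l _ => ((intB a j l).const_mul _).div_const _)]
    refine Finset.sum_congr rfl fun l _ => ?_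
    rw [integral_div, integral_const_mul]
  -- identical distribution of pairs
  have pairID : ∀ t : Fin n, t ≠ k →
      IdentDistrib (fun ω => ((X t ω, Y t ω), (X k ω, Y k ω)))
        (fun ω => ((X a ω, Y a ω), (X b ω, Y b ω))) μ μ := by
    intro t ht
    refine ⟨((hmeas t).prodMk (hmeas k)).aemeasurable,
      ((hmeas a).prodMk (hmeas b)).aemeasurable, ?_⟩
    rw [(indepFun_iff_map_prod_eq_prod_map_map ((hmeas t).aemeasurable)
        ((hmeas k).aemeasurable)).mp (hindep.indepFun ht),
      (indepFun_iff_map_prod_eq_prod_map_map ((hmeas a).aemeasurable)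
        ((hmeas b).aemeasurable)).mp (hindep.indepFun hab),
      (hident t).map_eq, (hident k).map_eq, (hident b).map_eq]
  -- diagonal terms
  have diagVal : ∀ t : Fin n, t ≠ k →
      ∫ ω, (Y k ω * Y t ω * K t k ω) * (Y k ω * Y t ω * K t k ω) ∂μ = C₁ := by
    intro t ht
    have hφm : Measurable (fun u : ((Fin p → ℝ) × ℝ) × ((Fin p → ℝ) × ℝ) =>
        (u.2.2)^2 * (u.1.2)^2 * ((1/(p:ℝ)) * ∑ j, u.1.1 j * u.2.1 j)^2) := by
      apply Measurable.mul
      · fun_prop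
      · apply Measurable.pow _ measurable_const
        apply Measurable.const_mul
        exact Finset.measurable_sum _ (fun j _ => by fun_prop)
    have h2 := ((pairID t ht).comp hφm).integral_eq
    simp only [Function.comp] at h2
    have h1 : ∫ ω, (Y k ω * Y t ω * K t k ω) * (Y k ω * Y t ω * K t k ω) ∂μ
        = ∫ ω, (Y k ω)^2 * (Y t ω)^2 * ((1/(p:ℝ)) * ∑ j, X t ω j * X k ω j)^2 ∂μ := by
      refine integral_congr_ae (Filter.Eventually.of_forall fun ω => ?_)
      simp only [hK]; ring
    rw [h1, hC₁]
    rw [h2]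
    refine integral_congr_ae (Filter.Eventually.of_forall fun ω => ?_)
    simp only [hK]; ring
  -- independence of per-term factors
  have termIndep : ∀ (t s : Fin n), t ≠ k → s ≠ k → ∀ (j l : Fin p),
      IndepFun (fun ω => (Y t ω * X t ω j) * (Y s ω * X s ω l))
               (fun ω => (Y k ω)^2 * (X k ω j * X k ω l)) μ := by
    intro t s ht hs j l
    have h0 := hindep.indepFun_prodMk hmeas t s k ht hs
    exact h0.comp (φ := fun u : ((Fin p → ℝ) × ℝ) × ((Fin p → ℝ) × ℝ) =>
        (u.1.2 * u.1.1 j) * (u.2.2 * u.2.1 l))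
      (ψ := fun z : (Fin p → ℝ) × ℝ => z.2^2 * (z.1 j * z.1 l)) (by fun_prop) (by fun_prop)
  have termInt : ∀ (t s : Fin n), t ≠ k → s ≠ k → ∀ (j l : Fin p),
      Integrable (fun ω => ((Y t ω * X t ω j) * (Y s ω * X s ω l))
        * ((Y k ω)^2 * (X k ω j * X k ω l))) μ := by
    intro t s ht hs j l
    exact (termIndep t s ht hs j l).integrable_mul (intA t s j l) (intB k j l)
  -- expansion of a generic product
  have expand : ∀ (t s : Fin n) (ω : Ω),
      (Y k ω * Y t ω * K t k ω) * (Y k ω * Y s ω * K s k ω)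
        = ∑ j, ∑ l, ((Y t ω * X t ω j) * (Y s ω * X s ω l))
            * ((Y k ω)^2 * (X k ω j * X k ω l)) / (p:ℝ)^2 := by
    intro t s ω
    rw [hK, hK, show (Y k ω * Y t ω * (1/(p:ℝ) * ∑ j, X t ω j * X k ω j))
          * (Y k ω * Y s ω * (1/(p:ℝ) * ∑ j, X s ω j * X k ω j))
        = ((∑ j, X t ω j * X k ω j) * (∑ j, X s ω j * X k ω j))
            * ((Y k ω)^2 * (Y t ω * Y s ω)) / (p:ℝ)^2 by ring,
      Finset.sum_mul_sum, Finset.sum_mul, Finset.sum_div]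
    refine Finset.sum_congr rfl fun j _ => ?_
    rw [Finset.sum_mul, Finset.sum_div]
    refine Finset.sum_congr rfl fun l _ => ?_
    ring
  have pairInt : ∀ (t s : Fin n), t ≠ k → s ≠ k →
      Integrable (fun ω => (Y k ω * Y t ω * K t k ω) * (Y k ω * Y s ω * K s k ω)) μ := by
    intro t s ht hs
    rw [show (fun ω => (Y k ω * Y t ω * K t k ω) * (Y k ω * Y s ω * K s k ω))
        = fun ω => ∑ j, ∑ l, ((Y t ω * X t ω j) * (Y s ω * X s ω l))
            * ((Y k ω)^2 * (X k ω j * X k ω l)) / (p:ℝ)^2 from funext (expand t s)]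
    exact integrable_finset_sum _ fun j _ => integrable_finset_sum _
      fun l _ => (termInt t s ht hs j l).div_const _
  -- off-diagonal terms
  have offVal : ∀ (t s : Fin n), t ≠ k → s ≠ k → t ≠ s →
      ∫ ω, (Y k ω * Y t ω * K t k ω) * (Y k ω * Y s ω * K s k ω) ∂μ = C₂ := by
    intro t s ht hs hts
    rw [integral_congr_ae (Filter.Eventually.of_forall (expand t s)),
      integral_finset_sum _ (fun j _ => integrable_finset_sum _
        fun l _ => (termInt t s ht hs j l).div_const _), hC₂']
    refine Finset.sum_congr rfl fun j _ => ?_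
    rw [integral_finset_sum _ (fun l _ => (termInt t s ht hs j l).div_const _)]
    refine Finset.sum_congr rfl fun l _ => ?_
    rw [integral_div]
    have h1 : ∫ ω, ((Y t ω * X t ω j) * (Y s ω * X s ω l))
          * ((Y k ω)^2 * (X k ω j * X k ω l)) ∂μ
        = (∫ ω, (Y t ω * X t ω j) * (Y s ω * X s ω l) ∂μ)
          * ∫ ω, (Y k ω)^2 * (X k ω j * X k ω l) ∂μ :=
      (termIndep t s ht hs j l).integral_fun_mul_eq_mul_integral (intA t s j l).aestronglyMeasurable
        (intB k j l).aestronglyMeasurable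
    have hFG : IndepFun (fun ω => Y t ω * X t ω j) (fun ω => Y s ω * X s ω l) μ :=
      (hindep.indepFun hts).comp
        (φ := fun z : (Fin p → ℝ) × ℝ => z.2 * z.1 j)
        (ψ := fun z : (Fin p → ℝ) × ℝ => z.2 * z.1 l) (by fun_prop) (by fun_prop)
    have h2 : ∫ ω, (Y t ω * X t ω j) * (Y s ω * X s ω l) ∂μ
        = (∫ ω, Y t ω * X t ω j ∂μ) * ∫ ω, Y s ω * X s ω l ∂μ :=
      hFG.integral_fun_mul_eq_mul_integral (intYX t j).aestronglyMeasurable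
        (intYX s l).aestronglyMeasurable
    rw [h1, h2, hint1 t j, hint1 s l, hintB k j l]
  -- assemble
  set S : Finset (Fin n) := univ.erase k with hS
  have hmainInt : ∀ t ∈ S, Integrable
      (fun ω => ∑ s ∈ S, (Y k ω * Y t ω * K t k ω) * (Y k ω * Y s ω * K s k ω)) μ :=
    fun t htS => integrable_finset_sum _ fun s hsS =>
      pairInt t s (Finset.ne_of_mem_erase htS) (Finset.ne_of_mem_erase hsS)
  have hmain : ∫ ω, (B₄ ω)^2 ∂μ
      = (1/((n:ℝ) * ((n:ℝ)-1)^2))^2 * ∑ t ∈ S, ∑ s ∈ S, (if t = s then C₁ else C₂) := by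
    have e : ∀ ω, (B₄ ω)^2 = (1/((n:ℝ) * ((n:ℝ)-1)^2))^2 * ∑ t ∈ S, ∑ s ∈ S,
        (Y k ω * Y t ω * K t k ω) * (Y k ω * Y s ω * K s k ω) := by
      intro ω
      rw [hB₄ ω, mul_pow, pow_two (∑ t ∈ univ.erase k, Y k ω * Y t ω * K t k ω),
        Finset.sum_mul_sum]
    rw [integral_congr_ae (Filter.Eventually.of_forall e), integral_const_mul,
      integral_finset_sum _ hmainInt]
    congr 1
    refine Finset.sum_congr rfl fun t htS => ?_
    rw [integral_finset_sum _ (fun s hsS =>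
      pairInt t s (Finset.ne_of_mem_erase htS) (Finset.ne_of_mem_erase hsS))]
    refine Finset.sum_congr rfl fun s hsS => ?_
    by_cases hts : t = s
    · subst hts
      rw [diagVal t (Finset.ne_of_mem_erase htS), if_pos rfl]
    · rw [offVal t s (Finset.ne_of_mem_erase htS) (Finset.ne_of_mem_erase hsS) hts,
        if_neg hts]
  -- count
  have hcard : S.card = n - 1 := by
    rw [hS, Finset.card_erase_of_mem (Finset.mem_univ k), Finset.card_univ, Fintype.card_fin]
  have hcardR : (S.card : ℝ) = (n:ℝ) - 1 := by
    rw [hcard]; push_cast [Nat.cast_sub (by omega : 1 ≤ n)]; ring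
  have hin : ∀ t ∈ S, ∑ s ∈ S, (if t = s then C₁ else C₂)
      = C₁ + ((n:ℝ) - 2) * C₂ := by
    intro t htS
    rw [← Finset.add_sum_erase S _ htS, if_pos rfl]
    congr 1
    rw [Finset.sum_congr rfl (fun s hsS => if_neg
      (Ne.symm (Finset.ne_of_mem_erase hsS))), Finset.sum_const, nsmul_eq_mul,
      Finset.card_erase_of_mem htS, hcard]
    have : ((n - 1 - 1 : ℕ) : ℝ) = (n:ℝ) - 2 := by
      push_cast [Nat.cast_sub (by omega : 1 ≤ n - 1), Nat.cast_sub (by omega : 1 ≤ n)]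
      ring
    rw [this]
  have hsum : ∑ t ∈ S, ∑ s ∈ S, (if t = s then C₁ else C₂)
      = ((n:ℝ) - 1) * (C₁ + ((n:ℝ) - 2) * C₂) := by
    rw [Finset.sum_congr rfl hin, Finset.sum_const, nsmul_eq_mul, hcardR]
  rw [hmain, hsum]
  have h0 : (n:ℝ) ≠ 0 := by linarith
  have h1 : (n:ℝ) - 1 ≠ 0 := by intro h; nlinarith [h]
  field_simp
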